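/- (Erdős–Gallai) Any graph on n vertices containing no path on ℓ vertices as a subgraph has at most (ℓ-2)·n/2 edges. -/

import Mathlib

open SimpleGraph

namespace EGaux

variable {V : Type*} {G : SimpleGraph V}

open SimpleGraph.Walk

/-- segment of a walk starting at index `m` spanning `d` edges -/
def seg {u v : V} (p : G.Walk u v) : ∀ (m d : ℕ), m + d ≤ p.length →
    G.Walk (p.getVert m) (p.getVert (m + d))
  | m, 0, _ => Walk.nil.copy rfl rfl
  | m, d+1, h => (Walk.cons (p.adj_getVert_succ (by omega))
      ((seg p (m+1) d (by omega)).copy rfl (by congr 1; omega)))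

lemma seg_length {u v : V} (p : G.Walk u v) (m d : ℕ) (h : m + d ≤ p.length) :
    (seg p m d h).length = d := by
  induction d generalizing m with
  | zero => simp [seg]
  | succ d ih => simp [seg, ih]

lemma seg_support {u v : V} (p : G.Walk u v) (m d : ℕ) (h : m + d ≤ p.length) :
    (seg p m d h).support = (List.range' m (d+1)).map p.getVert := by
  induction d generalizing m with
  | zero => simp [seg]
  | succ d ih =>
    rw [List.range'_succ]
    simp only [seg, support_cons, support_copy, ih]
    simp

/-- segment of a walk from index `m` to index `n` -/
def seg' {u v : V} (p : G.Walk u v) (m n : ℕ) (h1 : m ≤ n) (h2 : n ≤ p.length) :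
    G.Walk (p.getVert m) (p.getVert n) :=
  (seg p m (n - m) (by omega)).copy rfl (by congr 1; omega)

lemma seg'_length {u v : V} (p : G.Walk u v) (m n : ℕ) (h1 : m ≤ n) (h2 : n ≤ p.length) :
    (seg' p m n h1 h2).length = n - m := by
  simp [seg', seg_length]

lemma seg'_support {u v : V} (p : G.Walk u v) (m n : ℕ) (h1 : m ≤ n) (h2 : n ≤ p.length) :
    (seg' p m n h1 h2).support = (List.range' m (n - m + 1)).map p.getVert := by
  simp [seg', seg_support]

lemma getVert_eq_support_getElem {u v : V} (p : G.Walk u v) (i : ℕ) (hi : i ≤ p.length) :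
    p.getVert i = p.support[i]'(by rw [length_support]; omega) := by
  induction p generalizing i with
  | nil => simp at hi; subst hi; simp
  | cons h q ih =>
    cases i with
    | zero => simp
    | succ i =>
      simp only [support_cons]
      rw [getVert_cons_succ, ih i (by simpa using hi)]
      simp

lemma getVert_injOn {u v : V} {p : G.Walk u v} (hp : p.IsPath) {a b : ℕ}
    (ha : a ≤ p.length) (hb : b ≤ p.length) (hab : p.getVert a = p.getVert b) : a = b := by
  rw [getVert_eq_support_getElem _ a ha, getVert_eq_support_getElem _ b hb] at hab
  have hn : p.support.Nodup := (Walk.isPath_def p).mp hp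
  exact (List.Nodup.getElem_inj_iff hn).mp hab

lemma getVert_mem_support {u v : V} (p : G.Walk u v) {t : ℕ} (ht : t ≤ p.length) :
    p.getVert t ∈ p.support :=
  Walk.mem_support_iff_exists_getVert.mpr ⟨t, rfl, ht⟩

/-- a path has path prefixes of every shorter length -/
lemma exists_path_prefix {u v : V} (p : G.Walk u v) (hp : p.IsPath) (m : ℕ) (hm : m ≤ p.length) :
    ∃ (z : V) (q : G.Walk u z), q.IsPath ∧ q.length = m := by
  refine ⟨p.getVert m, (seg' p 0 m (by omega) hm).copy (p.getVert_zero) rfl, ?_, ?_⟩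
  · rw [Walk.isPath_def]
    rw [support_copy, seg'_support]
    refine List.Nodup.map_on ?_ (List.nodup_range')
    intro a ha b hb
    rw [List.mem_range'_1] at ha hb
    exact fun hab => getVert_injOn hp (by omega) (by omega) hab
  · simp [seg'_length]

end EGaux
open SimpleGraph
namespace EGaux
variable {V : Type*} [DecidableEq V] {G : SimpleGraph V}

/-- edges of `G` with both endpoints in `s` -/
def E (G : SimpleGraph V) [DecidablePred (· ∈ G.edgeSet)] (s : Finset V) : Finset (Sym2 V) :=
  s.sym2.filter (fun e => e ∈ G.edgeSet)

variable [DecidablePred (· ∈ G.edgeSet)]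

lemma mem_E {s : Finset V} {a b : V} :
    s(a, b) ∈ E G s ↔ (a ∈ s ∧ b ∈ s) ∧ G.Adj a b := by
  simp [E, Finset.mk_mem_sym2_iff]

/-- at most `card choose 2` many edges inside `s` -/
lemma two_mul_card_E_le (s : Finset V) : 2 * (E G s).card ≤ s.card * (s.card - 1) := by
  classical
  induction s using Finset.induction_on with
  | empty => simp [E]
  | @insert a t ha ih =>
    have hsub : E G (insert a t) ⊆ E G t ∪ (t.filter (G.Adj a)).image (fun z => s(a, z)) := by
      intro e he
      induction e using Sym2.ind with
      | _ u w =>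
        rw [mem_E] at he
        obtain ⟨⟨hu, hw⟩, hadj⟩ := he
        rw [Finset.mem_insert] at hu hw
        rcases hu with rfl | hu
        · rcases hw with rfl | hw
          · exact absurd hadj (G.irrefl)
          · exact Finset.mem_union_right _ (Finset.mem_image.mpr
              ⟨w, Finset.mem_filter.mpr ⟨hw, hadj⟩, rfl⟩)
        · rcases hw with rfl | hw
          · refine Finset.mem_union_right _ (Finset.mem_image.mpr
              ⟨u, Finset.mem_filter.mpr ⟨hu, hadj.symm⟩, Sym2.eq_swap⟩)
          · exact Finset.mem_union_left _ (mem_E.mpr ⟨⟨hu, hw⟩, hadj⟩)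
    have hcard : (E G (insert a t)).card ≤ (E G t).card + t.card := by
      calc (E G (insert a t)).card ≤ _ := Finset.card_le_card hsub
        _ ≤ (E G t).card + ((t.filter (G.Adj a)).image (fun z => s(a, z))).card :=
          Finset.card_union_le _ _
        _ ≤ (E G t).card + t.card := by
          gcongr
          exact (Finset.card_image_le).trans (Finset.card_le_card (Finset.filter_subset _ _))
    rw [Finset.card_insert_of_notMem ha]
    have h2 : ∀ n : ℕ, n * (n - 1) + 2 * n ≤ (n + 1) * (n + 1 - 1) := by
      intro n
      cases n with
      | zero => simp
      | succ m => rw [Nat.add_sub_cancel, Nat.add_sub_cancel]; nlinarith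
    have h2 := h2 t.card
    omega
end EGaux
namespace EGaux
variable {V : Type*} {G : SimpleGraph V}
open SimpleGraph.Walk

lemma support_nodup_of {x y w : V} {p : G.Walk x y} (hp : p.IsPath) (hwn : w ∉ p.support)
    (I : List ℕ) (hI : I.Nodup) (hIk : ∀ t ∈ I, t ≤ p.length) :
    (w :: I.map p.getVert).Nodup := by
  rw [List.nodup_cons]
  constructor
  · intro hmem
    obtain ⟨t, ht, heq⟩ := List.mem_map.mp hmem
    exact hwn (heq ▸ getVert_mem_support p (hIk t ht))
  · exact hI.map_on (fun a ha b hb hab => getVert_injOn hp (hIk a ha) (hIk b hb) hab)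

/-- the rotation trick: a pendant vertex attached to a "cycle" through all vertices of a
maximal path yields a longer path -/
lemma rotation_path {x y w : V} {p : G.Walk x y} (hp : p.IsPath) {k i j : ℕ}
    (hlen : p.length = k) (hik : i < k) (hj0 : 0 < j) (hjk : j < k)
    (hxi : G.Adj x (p.getVert (i+1))) (hyi : G.Adj y (p.getVert i))
    (hwn : w ∉ p.support) (hwadj : G.Adj w (p.getVert j)) :
    ∃ (z : V) (q : G.Walk w z), q.IsPath ∧ q.length = k + 1 ∧
      ∀ v ∈ q.support, v = w ∨ v ∈ p.support := by
  have hx' : p.getVert 0 = x := p.getVert_zero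
  have hy' : p.getVert k = y := by rw [← hlen]; exact p.getVert_length
  have h1 : G.Adj (p.getVert i) (p.getVert k) := by rw [hy']; exact hyi.symm
  have h2 : G.Adj (p.getVert (i+1)) (p.getVert 0) := by rw [hx']; exact hxi.symm
  rcases le_or_gt j i with hji | hij
  · -- w, v_j .. v_i, v_k .. v_{i+1}, v_0 .. v_{j-1}
    set A := seg' p j i hji (by omega) with hA
    set Brev := (seg' p (i+1) k (by omega) (by omega)).reverse with hBrev
    set C := seg' p 0 (j-1) (by omega) (by omega) with hC
    set W := Walk.cons hwadj (A.append (Walk.cons h1 (Brev.append (Walk.cons h2 C)))) with hW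
    set I := List.range' j (i - j + 1) ++ ((List.range' (i+1) (k - (i+1) + 1)).reverse
        ++ List.range' 0 (j - 1 + 1)) with hI
    have hsup : W.support = w :: I.map p.getVert := by
      rw [hW, hI]
      simp only [Walk.support_cons, Walk.support_append, Walk.support_reverse, List.tail_cons,
        hA, hBrev, hC, seg'_support, List.map_append, List.map_reverse, Nat.sub_zero]
    have hIk : ∀ t ∈ I, t ≤ p.length := by
      intro t ht
      rw [hI] at ht
      simp only [List.mem_append, List.mem_reverse, List.mem_range'_1] at ht
      omega
    have hInodup : I.Nodup := by
      rw [hI]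
      refine List.Nodup.append (List.nodup_range')
        (List.Nodup.append (by simpa using List.nodup_range' (s := i+1) (n := k - (i+1) + 1))
          (List.nodup_range') ?_) ?_
      · intro a ha hb
        rw [List.mem_reverse, List.mem_range'_1] at ha
        rw [List.mem_range'_1] at hb
        omega
      · intro a ha hb
        rw [List.mem_range'_1] at ha
        simp only [List.mem_append, List.mem_reverse, List.mem_range'_1] at hb
        omega
    refine ⟨_, W, ?_, ?_, ?_⟩
    · rw [Walk.isPath_def, hsup]
      exact support_nodup_of hp hwn I hInodup hIk
    · rw [hW]
      simp only [Walk.length_cons, Walk.length_append, Walk.length_reverse,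
        hA, hBrev, hC, seg'_length]
      omega
    · intro v hv
      rw [hsup, List.mem_cons] at hv
      rcases hv with rfl | hv
      · exact Or.inl rfl
      · obtain ⟨t, ht, heq⟩ := List.mem_map.mp hv
        exact Or.inr (heq ▸ getVert_mem_support p (hIk t ht))
  · -- w, v_j .. v_{i+1}, v_0 .. v_i, v_k .. v_{j+1}
    set Arev := (seg' p (i+1) j hij (by omega)).reverse with hArev
    set C := seg' p 0 i (by omega) (by omega) with hC
    set Brev := (seg' p (j+1) k (by omega) (by omega)).reverse with hBrev
    set W := Walk.cons hwadj (Arev.append (Walk.cons h2 (C.append (Walk.cons h1 Brev)))) with hW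
    set I := (List.range' (i+1) (j - (i+1) + 1)).reverse ++ (List.range' 0 (i + 1)
        ++ (List.range' (j+1) (k - (j+1) + 1)).reverse) with hI
    have hsup : W.support = w :: I.map p.getVert := by
      rw [hW, hI]
      simp only [Walk.support_cons, Walk.support_append, Walk.support_reverse, List.tail_cons,
        hArev, hBrev, hC, seg'_support, List.map_append, List.map_reverse, Nat.sub_zero]
    have hIk : ∀ t ∈ I, t ≤ p.length := by
      intro t ht
      rw [hI] at ht
      simp only [List.mem_append, List.mem_reverse, List.mem_range'_1] at ht
      omega
    have hInodup : I.Nodup := by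
      rw [hI]
      refine List.Nodup.append (by simpa using List.nodup_range' (s := i+1) (n := j - (i+1) + 1))
        (List.Nodup.append (List.nodup_range')
          (by simpa using List.nodup_range' (s := j+1) (n := k - (j+1) + 1)) ?_) ?_
      · intro a ha hb
        rw [List.mem_range'_1] at ha
        rw [List.mem_reverse, List.mem_range'_1] at hb
        omega
      · intro a ha hb
        rw [List.mem_reverse, List.mem_range'_1] at ha
        simp only [List.mem_append, List.mem_reverse, List.mem_range'_1] at hb
        omega
    refine ⟨_, W, ?_, ?_, ?_⟩
    · rw [Walk.isPath_def, hsup]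
      exact support_nodup_of hp hwn I hInodup hIk
    · rw [hW]
      simp only [Walk.length_cons, Walk.length_append, Walk.length_reverse,
        hArev, hBrev, hC, seg'_length]
      omega
    · intro v hv
      rw [hsup, List.mem_cons] at hv
      rcases hv with rfl | hv
      · exact Or.inl rfl
      · obtain ⟨t, ht, heq⟩ := List.mem_map.mp hv
        exact Or.inr (heq ▸ getVert_mem_support p (hIk t ht))
end EGaux
namespace EGaux
variable {V : Type*} [DecidableEq V] {G : SimpleGraph V} [DecidablePred (· ∈ G.edgeSet)]

open SimpleGraph Walk

theorem main (ℓ : ℕ) (hℓ : 2 ≤ ℓ)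
    (hfree : ¬ ∃ (x y : V) (p : G.Walk x y), p.IsPath ∧ p.length = ℓ - 1)
    (s : Finset V) : 2 * (E G s).card ≤ (ℓ - 2) * s.card := by
  classical
  induction s using Finset.strongInduction with
  | _ s ih =>
  by_cases hE : E G s = ∅
  · simp [hE]
  obtain ⟨e, he⟩ := Finset.nonempty_iff_ne_empty.mpr hE
  induction e using Sym2.ind with
  | _ u₀ w₀ =>
  rw [mem_E] at he
  obtain ⟨⟨hu₀, hw₀⟩, hadj₀⟩ := he
  -- the set of lengths of paths inside s
  set M : Set ℕ := {m | ∃ (x y : V) (p : G.Walk x y), p.IsPath ∧ (∀ v ∈ p.support, v ∈ s)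
    ∧ p.length = m} with hM
  have h1M : 1 ∈ M := by
    refine ⟨u₀, w₀, Walk.cons hadj₀ Walk.nil, by simp [hadj₀.ne], ?_, by simp⟩
    intro v hv
    simp only [Walk.support_cons, Walk.support_nil, List.mem_cons, List.mem_singleton,
      List.not_mem_nil, or_false] at hv
    rcases hv with rfl | rfl
    · exact hu₀
    · exact hw₀
  have hbdd : BddAbove M := by
    refine ⟨s.card, fun m hm => ?_⟩
    obtain ⟨x, y, p, hp, hps, hlen⟩ := hm
    have hnd : p.support.Nodup := (Walk.isPath_def p).mp hp
    have h1 : p.support.toFinset.card = p.support.length := List.toFinset_card_of_nodup hnd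
    have h2 : p.support.toFinset ⊆ s := fun v hv => hps v (List.mem_toFinset.mp hv)
    have := Finset.card_le_card h2
    rw [h1, Walk.length_support] at this
    omega
  set k := sSup M with hkdef
  obtain ⟨x, y, p, hp, hps, hlen⟩ : k ∈ M := Nat.sSup_mem ⟨1, h1M⟩ hbdd
  have hk1 : 1 ≤ k := le_csSup hbdd h1M
  have hkl : k ≤ ℓ - 2 := by
    by_contra hc
    obtain ⟨z, q, hq, hqlen⟩ := exists_path_prefix p hp (ℓ - 1) (by omega)
    exact hfree ⟨x, z, q, hq, hqlen⟩
  have hxs : x ∈ s := hps x p.start_mem_support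
  have hys : y ∈ s := hps y p.end_mem_support
  have hxy : x ≠ y := by
    intro h
    subst h
    have := getVert_injOn hp (Nat.zero_le _) (le_refl _) (by rw [p.getVert_zero, p.getVert_length])
    omega
  -- maximality
  have hmaxx : ∀ z ∈ s, G.Adj x z → z ∈ p.support := by
    intro z hzs hzadj
    by_contra hzn
    have : k + 1 ∈ M := by
      refine ⟨z, y, Walk.cons hzadj.symm p, hp.cons hzn, ?_, by simp [hlen]⟩
      intro v hv
      simp only [Walk.support_cons, List.mem_cons] at hv
      rcases hv with rfl | hv
      · exact hzs
      · exact hps v hv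
    have := le_csSup hbdd this
    omega
  have hmaxy : ∀ z ∈ s, G.Adj y z → z ∈ p.support := by
    intro z hzs hzadj
    by_contra hzn
    have : k + 1 ∈ M := by
      refine ⟨z, x, Walk.cons hzadj.symm p.reverse, hp.reverse.cons (by simpa using hzn), ?_,
        by simp [hlen]⟩
      intro v hv
      simp only [Walk.support_cons, List.mem_cons] at hv
      rcases hv with rfl | hv
      · exact hzs
      · exact hps v (by simpa using hv)
    have := le_csSup hbdd this
    omega
  set d0 := (s.filter (G.Adj x)).card with hd0
  set dk := (s.filter (G.Adj y)).card with hdk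
  by_cases hd : d0 + dk ≤ k
  -- CASE 1 : delete both endpoints
  · set t := s \ {x, y} with ht
    have hts : t ⊂ s := by
      refine Finset.ssubset_iff_of_subset (Finset.sdiff_subset) |>.mpr ?_
      exact ⟨x, hxs, by simp [ht]⟩
    have hsub : E G s ⊆ E G t ∪ (s.filter (G.Adj x)).image (fun z => s(x, z))
        ∪ (s.filter (G.Adj y)).image (fun z => s(y, z)) := by
      intro e he
      induction e using Sym2.ind with
      | _ a b =>
        rw [mem_E] at he
        obtain ⟨⟨has, hbs⟩, hab⟩ := he
        by_cases hax : a = x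
        · subst hax
          exact Finset.mem_union_left _ (Finset.mem_union_right _
            (Finset.mem_image.mpr ⟨b, Finset.mem_filter.mpr ⟨hbs, hab⟩, rfl⟩))
        · by_cases hbx : b = x
          · subst hbx
            exact Finset.mem_union_left _ (Finset.mem_union_right _
              (Finset.mem_image.mpr ⟨a, Finset.mem_filter.mpr ⟨has, hab.symm⟩, Sym2.eq_swap⟩))
          · by_cases hay : a = y
            · subst hay
              exact Finset.mem_union_right _
                (Finset.mem_image.mpr ⟨b, Finset.mem_filter.mpr ⟨hbs, hab⟩, rfl⟩)
            · by_cases hby : b = y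
              · subst hby
                exact Finset.mem_union_right _
                  (Finset.mem_image.mpr ⟨a, Finset.mem_filter.mpr ⟨has, hab.symm⟩, Sym2.eq_swap⟩)
              · refine Finset.mem_union_left _ (Finset.mem_union_left _ (mem_E.mpr ⟨⟨?_, ?_⟩, hab⟩))
                · simp [ht, has, hax, hay]
                · simp [ht, hbs, hbx, hby]
    have hcard : (E G s).card ≤ (E G t).card + d0 + dk := by
      calc (E G s).card ≤ _ := Finset.card_le_card hsub
        _ ≤ (E G t ∪ (s.filter (G.Adj x)).image (fun z => s(x, z))).card
            + ((s.filter (G.Adj y)).image (fun z => s(y, z))).card := Finset.card_union_le _ _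
        _ ≤ (E G t).card + ((s.filter (G.Adj x)).image (fun z => s(x, z))).card
            + ((s.filter (G.Adj y)).image (fun z => s(y, z))).card := by
          gcongr; exact Finset.card_union_le _ _
        _ ≤ (E G t).card + d0 + dk := by
          gcongr <;> exact Finset.card_image_le
    have hpairs : ({x, y} : Finset V) ⊆ s := by
      intro v hv; simp at hv; rcases hv with rfl | rfl <;> assumption
    have hcardt : t.card = s.card - 2 := by
      rw [ht, Finset.card_sdiff_of_subset hpairs, Finset.card_pair hxy]
    have h2s : 2 ≤ s.card := by
      have := Finset.card_le_card hpairs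
      rwa [Finset.card_pair hxy] at this
    have iht := ih t hts
    rw [hcardt] at iht
    have harith : (ℓ - 2) * (s.card - 2) + 2 * (ℓ - 2) = (ℓ - 2) * s.card := by
      have h22 : s.card - 2 + 2 = s.card := by omega
      calc (ℓ - 2) * (s.card - 2) + 2 * (ℓ - 2) = (ℓ - 2) * (s.card - 2 + 2) := by ring
        _ = (ℓ - 2) * s.card := by rw [h22]
    omega
  -- CASE 2
  · push_neg at hd
    have hx' : p.getVert 0 = x := p.getVert_zero
    have hy' : p.getVert k = y := by rw [← hlen]; exact p.getVert_length
    set A := (Finset.range k).filter (fun i => G.Adj x (p.getVert (i+1))) with hA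
    set B := (Finset.range k).filter (fun i => G.Adj y (p.getVert i)) with hB
    have hd0A : d0 ≤ A.card := by
      have hsub : s.filter (G.Adj x) ⊆ A.image (fun i => p.getVert (i+1)) := by
        intro z hz
        rw [Finset.mem_filter] at hz
        obtain ⟨hzs, hzadj⟩ := hz
        obtain ⟨n, hn, hnk⟩ := Walk.mem_support_iff_exists_getVert.mp (hmaxx z hzs hzadj)
        have hn0 : n ≠ 0 := by
          intro h; subst h; rw [p.getVert_zero] at hn; subst hn; exact G.irrefl hzadj
        refine Finset.mem_image.mpr ⟨n - 1, Finset.mem_filter.mpr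
          ⟨Finset.mem_range.mpr (by omega), ?_⟩, ?_⟩ <;>
          rw [Nat.sub_add_cancel (by omega), hn]
        exact hzadj
      calc d0 ≤ (A.image (fun i => p.getVert (i+1))).card := Finset.card_le_card hsub
        _ ≤ A.card := Finset.card_image_le
    have hdkB : dk ≤ B.card := by
      have hsub : s.filter (G.Adj y) ⊆ B.image (fun i => p.getVert i) := by
        intro z hz
        rw [Finset.mem_filter] at hz
        obtain ⟨hzs, hzadj⟩ := hz
        obtain ⟨n, hn, hnk⟩ := Walk.mem_support_iff_exists_getVert.mp (hmaxy z hzs hzadj)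
        have hnk' : n ≠ p.length := by
          intro h; subst h; rw [p.getVert_length] at hn; subst hn; exact G.irrefl hzadj
        refine Finset.mem_image.mpr ⟨n, Finset.mem_filter.mpr
          ⟨Finset.mem_range.mpr (by omega), by rw [hn]; exact hzadj⟩, hn⟩
      calc dk ≤ (B.image (fun i => p.getVert i)).card := Finset.card_le_card hsub
        _ ≤ B.card := Finset.card_image_le
    have hABk : (A ∪ B).card ≤ k := by
      have hsub : A ∪ B ⊆ Finset.range k := by
        rw [hA, hB]
        exact Finset.union_subset (Finset.filter_subset _ _) (Finset.filter_subset _ _)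
      simpa using Finset.card_le_card hsub
    have hinter : (A ∩ B).Nonempty := by
      rw [← Finset.card_pos]
      have := Finset.card_union_add_card_inter A B
      omega
    obtain ⟨i, hi⟩ := hinter
    rw [Finset.mem_inter, hA, hB, Finset.mem_filter, Finset.mem_filter, Finset.mem_range] at hi
    obtain ⟨⟨hik, hxi⟩, -, hyi⟩ := hi
    by_cases hw : ∃ w ∈ s, w ∉ p.support ∧ ∃ j, j ≤ k ∧ G.Adj w (p.getVert j)
    · exfalso
      obtain ⟨w, hws, hwn, j, hjk, hwadj⟩ := hw
      have hk1M : k + 1 ∈ M := by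
        rcases Nat.eq_zero_or_pos j with rfl | hj0
        · rw [hx'] at hwadj
          refine ⟨w, y, Walk.cons hwadj p, hp.cons hwn, ?_, by simp [hlen]⟩
          intro v hv
          simp only [Walk.support_cons, List.mem_cons] at hv
          rcases hv with rfl | hv
          · exact hws
          · exact hps v hv
        · rcases eq_or_lt_of_le hjk with rfl | hjk'
          · rw [hy'] at hwadj
            refine ⟨w, x, Walk.cons hwadj p.reverse, hp.reverse.cons (by simpa using hwn), ?_,
              by simp [hlen]⟩
            intro v hv
            simp only [Walk.support_cons, List.mem_cons] at hv
            rcases hv with rfl | hv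
            · exact hws
            · exact hps v (by simpa using hv)
          · obtain ⟨z, q, hq, hqlen, hqsup⟩ :=
              rotation_path hp hlen hik hj0 hjk' hxi hyi hwn hwadj
            refine ⟨w, z, q, hq, ?_, hqlen⟩
            intro v hv
            rcases hqsup v hv with rfl | hv'
            · exact hws
            · exact hps v hv'
      have := le_csSup hbdd hk1M
      omega
    · -- no edges leave the support of p : split s
      push_neg at hw
      set S := p.support.toFinset with hS
      have hSsub : S ⊆ s := by
        intro v hv
        exact hps v (List.mem_toFinset.mp hv)
      have hcardS : S.card = k + 1 := by
        rw [hS, List.toFinset_card_of_nodup ((Walk.isPath_def p).mp hp), Walk.length_support, hlen]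
      have hsplit : E G s ⊆ E G S ∪ E G (s \ S) := by
        intro e he
        induction e using Sym2.ind with
        | _ a b =>
          rw [mem_E] at he
          obtain ⟨⟨has, hbs⟩, hab⟩ := he
          have key : ∀ a b : V, G.Adj a b → a ∈ S → b ∈ s → b ∈ S := by
            intro a b hab haS hbs
            by_contra hbS
            obtain ⟨n, hn, hnk⟩ :=
              Walk.mem_support_iff_exists_getVert.mp (List.mem_toFinset.mp haS)
            exact (hw b hbs (fun hc => hbS (List.mem_toFinset.mpr hc)) n (by omega))
              (hn ▸ hab.symm)
          by_cases haS : a ∈ S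
          · exact Finset.mem_union_left _ (mem_E.mpr ⟨⟨haS, key a b hab haS hbs⟩, hab⟩)
          · have hbS : b ∉ S := fun hbS => haS (key b a hab.symm hbS has)
            exact Finset.mem_union_right _
              (mem_E.mpr ⟨⟨Finset.mem_sdiff.mpr ⟨has, haS⟩, Finset.mem_sdiff.mpr ⟨hbs, hbS⟩⟩, hab⟩)
      have hcard : (E G s).card ≤ (E G S).card + (E G (s \ S)).card :=
        (Finset.card_le_card hsplit).trans (Finset.card_union_le _ _)
      have hclique : 2 * (E G S).card ≤ (k + 1) * k := by
        have := two_mul_card_E_le (G := G) S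
        rwa [hcardS, Nat.add_sub_cancel] at this
      have hsdiff : s \ S ⊂ s := by
        refine Finset.ssubset_iff_of_subset (Finset.sdiff_subset) |>.mpr ?_
        exact ⟨x, hxs, by simp [Finset.mem_sdiff, hS, List.mem_toFinset.mpr p.start_mem_support]⟩
      have iht := ih (s \ S) hsdiff
      rw [Finset.card_sdiff_of_subset hSsub, hcardS] at iht
      have hks : k + 1 ≤ s.card := by
        have := Finset.card_le_card hSsub
        omega
      have harith : (k + 1) * k + (ℓ - 2) * (s.card - (k + 1)) ≤ (ℓ - 2) * s.card := by
        have h1' : (k + 1) * k ≤ (ℓ - 2) * (k + 1) := by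
          calc (k + 1) * k ≤ (k + 1) * (ℓ - 2) := Nat.mul_le_mul_left _ hkl
            _ = (ℓ - 2) * (k + 1) := Nat.mul_comm _ _
        calc (k + 1) * k + (ℓ - 2) * (s.card - (k + 1))
            ≤ (ℓ - 2) * (k + 1) + (ℓ - 2) * (s.card - (k + 1)) := Nat.add_le_add_right h1' _
          _ = (ℓ - 2) * ((k + 1) + (s.card - (k + 1))) := by ring
          _ = (ℓ - 2) * s.card := by rw [Nat.add_sub_cancel' hks]
      omega

end EGaux

/-- Erdős–Gallai: a graph on `n` vertices containing no path on
`ℓ` vertices (i.e. no simple path of length `ℓ - 1`) has at most `(ℓ-2)·n/2`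
edges. -/
theorem stmt3 {V : Type*} [Fintype V] (G : SimpleGraph V) (ℓ : ℕ)
    (hfree : ¬ ∃ (x y : V) (p : G.Walk x y), p.IsPath ∧ p.length = ℓ - 1) :
    (G.edgeSet.ncard : ℝ) ≤ ((ℓ : ℝ) - 2) * (Fintype.card V) / 2 := by
  classical
  rcases isEmpty_or_nonempty V with hV | hV
  · have h0 : G.edgeSet = ∅ := by
      ext e
      induction e using Sym2.ind with
      | _ a b => exact (IsEmpty.false a).elim
    have hc0 : Fintype.card V = 0 := Fintype.card_eq_zero
    rw [h0, hc0]
    simp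
  · have hl2 : 2 ≤ ℓ := by
      by_contra hc
      obtain ⟨v⟩ := hV
      exact hfree ⟨v, v, SimpleGraph.Walk.nil, SimpleGraph.Walk.IsPath.nil, by simp [SimpleGraph.Walk.length_nil]; omega⟩
    have hmain := EGaux.main (G := G) ℓ hl2 hfree Finset.univ
    have hEuniv : EGaux.E G Finset.univ = G.edgeFinset := by
      ext e
      simp [EGaux.E, SimpleGraph.mem_edgeFinset]
    have hncard : G.edgeSet.ncard = G.edgeFinset.card := by
      simp [Set.ncard_eq_toFinset_card', SimpleGraph.edgeFinset]
    rw [hEuniv, Finset.card_univ] at hmain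
    rw [hncard]
    have hcast := (Nat.cast_le (α := ℝ)).mpr hmain
    push_cast [Nat.cast_sub hl2] at hcast
    linarith
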